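/- arXiv:2412.04763 — 2 statements merged into one kernel-verified Lean document; each statement's English description precedes it below -/
import Mathlib

section
/- For every r > 0 and θ ∈ (0,π), the function r ↦ p(r,θ) is differentiable and ∂p/∂r(r,θ) + g·ρ(r,θ) = (1/r)·(F(r·sin θ) + r·sin θ·𝓕(r·sin θ, θ)) = U(r,θ)/r. -/
/-- The characteristic curve `s ↦ θ̄(s)`. -/
noncomputable def thetaBar (s : ℝ) : ℝ :=
  Real.arccos ((1 - Real.exp (2 * s)) / (1 + Real.exp (2 * s)))

/-- The function `f(θ) = ½·ln((1−cos θ)/(1+cos θ))`. -/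
noncomputable def fChar (θ : ℝ) : ℝ :=
  (1 / 2) * Real.log ((1 - Real.cos θ) / (1 + Real.cos θ))

/-- `𝓕(ξ,θ) = ∫₀^{f(θ)} g·ρ_θ(ξ·(e^s+e^{−s})/2, θ̄(s)) ds`. -/
noncomputable def calF (g : ℝ) (ρθ : ℝ → ℝ → ℝ) (ξ θ : ℝ) : ℝ :=
  ∫ s in (0:ℝ)..(fChar θ),
    g * ρθ (ξ * (Real.exp s + Real.exp (-s)) / 2) (thetaBar s)

/-- `U(r,θ) = F(r·sin θ) + r·sin θ·𝓕(r·sin θ, θ)`. -/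
noncomputable def UU (g : ℝ) (ρθ : ℝ → ℝ → ℝ) (F : ℝ → ℝ) (r θ : ℝ) : ℝ :=
  F (r * Real.sin θ) + r * Real.sin θ * calF g ρθ (r * Real.sin θ) θ

/-- The pressure
`p(r,θ) = b − g·∫_a^r ρ(s,θ) ds + ∫_{a sin θ}^{r sin θ} (F(s)/s + 𝓕(s,θ)) ds
  + ∫_{π/2}^{θ} (F(a sin s)·cot s + 𝓕(a sin s, s)·a·cos s) ds`. -/
noncomputable def pres (g a b : ℝ) (ρ ρθ : ℝ → ℝ → ℝ) (F : ℝ → ℝ) (r θ : ℝ) : ℝ :=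
  b - g * (∫ s in a..r, ρ s θ)
    + (∫ s in (a * Real.sin θ)..(r * Real.sin θ), (F s / s + calF g ρθ s θ))
    + ∫ s in (Real.pi / 2)..θ,
        (F (a * Real.sin s) * Real.cot s + calF g ρθ (a * Real.sin s) s * a * Real.cos s)


lemma thetaBar_mem (s : ℝ) : thetaBar s ∈ Set.Ioo 0 Real.pi := by
  have he : 0 < Real.exp (2 * s) := Real.exp_pos _
  have hd : 0 < 1 + Real.exp (2 * s) := by linarith
  constructor
  · rw [thetaBar, Real.arccos_pos, div_lt_one hd]; linarith
  · rcases lt_or_eq_of_le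
      (Real.arccos_le_pi ((1 - Real.exp (2 * s)) / (1 + Real.exp (2 * s)))) with h | h
    · exact h
    · exfalso
      have := Real.arccos_eq_pi.mp h
      rw [div_le_iff₀ hd] at this
      linarith

lemma rho_theta_cont (ρ ρθ : ℝ → ℝ → ℝ)
    (hρ : ContDiffOn ℝ 1 (fun q : ℝ × ℝ => ρ q.1 q.2) (Set.Ioi 0 ×ˢ Set.Ioo 0 Real.pi))
    (hρθ : ∀ r ∈ Set.Ioi (0:ℝ), ∀ t ∈ Set.Ioo 0 Real.pi,
      HasDerivAt (fun u => ρ r u) (ρθ r t) t) :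
    ContinuousOn (fun q : ℝ × ℝ => ρθ q.1 q.2) (Set.Ioi 0 ×ˢ Set.Ioo 0 Real.pi) := by
  have hopen : IsOpen ((Set.Ioi (0:ℝ)) ×ˢ Set.Ioo 0 Real.pi) := isOpen_Ioi.prod isOpen_Ioo
  have hD : ContinuousOn (fun q => fderiv ℝ (fun q : ℝ × ℝ => ρ q.1 q.2) q)
      (Set.Ioi 0 ×ˢ Set.Ioo 0 Real.pi) :=
    hρ.continuousOn_fderiv_of_isOpen hopen le_rfl
  have key : ∀ q ∈ (Set.Ioi (0:ℝ)) ×ˢ Set.Ioo 0 Real.pi,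
      ρθ q.1 q.2 = fderiv ℝ (fun q : ℝ × ℝ => ρ q.1 q.2) q ((0 : ℝ), (1 : ℝ)) := by
    rintro ⟨x, y⟩ hq
    have hdiff : DifferentiableAt ℝ (fun q : ℝ × ℝ => ρ q.1 q.2) (x, y) :=
      (hρ.contDiffAt (hopen.mem_nhds hq)).differentiableAt one_ne_zero
    have hline : HasDerivAt (fun t : ℝ => ((x, t) : ℝ × ℝ)) (((0:ℝ), (1:ℝ))) y :=
      (hasDerivAt_const y x).prodMk (hasDerivAt_id y)
    have hcomp : HasDerivAt (fun t => ρ x t)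
        (fderiv ℝ (fun q : ℝ × ℝ => ρ q.1 q.2) (x, y) ((0:ℝ), (1:ℝ))) y :=
      hdiff.hasFDerivAt.comp_hasDerivAt y hline
    exact (hρθ x hq.1 y hq.2).unique hcomp
  exact (hD.clm_apply continuousOn_const).congr key

lemma calF_contOn (g : ℝ) (ρθ : ℝ → ℝ → ℝ) (θ : ℝ)
    (hρθc : ContinuousOn (fun q : ℝ × ℝ => ρθ q.1 q.2) (Set.Ioi 0 ×ˢ Set.Ioo 0 Real.pi)) :
    ContinuousOn (fun ξ => calF g ρθ ξ θ) (Set.Ioi 0) := by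
  intro ξ₀ hξ₀
  have hξ₀' : (0:ℝ) < ξ₀ := hξ₀
  set c : ℝ := ξ₀ / 2 with hc
  have hcpos : 0 < c := by positivity
  have hφ : Continuous (fun p : ℝ × ℝ =>
      ((max p.1 c * (Real.exp p.2 + Real.exp (-p.2)) / 2 : ℝ), thetaBar p.2)) := by
    apply Continuous.prodMk
    · fun_prop
    · unfold thetaBar
      apply Real.continuous_arccos.comp
      apply Continuous.div (by fun_prop) (by fun_prop)
      intro p
      have := Real.exp_pos (2 * p.2)
      positivity
  have hmem : ∀ p : ℝ × ℝ,
      ((max p.1 c * (Real.exp p.2 + Real.exp (-p.2)) / 2 : ℝ), thetaBar p.2)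
        ∈ (Set.Ioi (0:ℝ)) ×ˢ Set.Ioo 0 Real.pi := by
    intro p
    constructor
    · have h1 : 0 < max p.1 c := lt_of_lt_of_le hcpos (le_max_right _ _)
      have h2 : 0 < Real.exp p.2 + Real.exp (-p.2) := by positivity
      exact div_pos (mul_pos h1 h2) two_pos
    · exact thetaBar_mem p.2
  have huncurry : Continuous (Function.uncurry fun (ξ s : ℝ) =>
      g * ρθ (max ξ c * (Real.exp s + Real.exp (-s)) / 2) (thetaBar s)) := by
    apply continuous_const.mul
    exact hρθc.comp_continuous hφ hmem
  have hK : Continuous (fun ξ => ∫ s in (0:ℝ)..(fChar θ),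
      g * ρθ (max ξ c * (Real.exp s + Real.exp (-s)) / 2) (thetaBar s)) :=
    intervalIntegral.continuous_parametric_intervalIntegral_of_continuous' huncurry 0 (fChar θ)
  apply ContinuousAt.continuousWithinAt
  apply (hK.continuousAt).congr
  have hnb : Set.Ioi c ∈ nhds ξ₀ := Ioi_mem_nhds (by rw [hc]; linarith)
  filter_upwards [hnb] with ξ hξ
  have hmax : max ξ c = ξ := max_eq_left (le_of_lt hξ)
  simp only [calF, hmax]

/-- For every `r > 0`, `θ ∈ (0,π)` the map `r ↦ p(r,θ)` is differentiable and
`p_r(r,θ) + g·ρ(r,θ) = (1/r)·(F(r sin θ) + r sin θ·𝓕(r sin θ,θ)) = U(r,θ)/r`. -/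
theorem pressure_deriv_r (g a b : ℝ) (hg : 0 < g) (ha : 0 < a)
    (ρ ρθ : ℝ → ℝ → ℝ)
    (hρ : ContDiffOn ℝ 1 (fun q : ℝ × ℝ => ρ q.1 q.2)
      (Set.Ioi 0 ×ˢ Set.Ioo 0 Real.pi))
    (hρθ : ∀ r ∈ Set.Ioi (0:ℝ), ∀ t ∈ Set.Ioo 0 Real.pi,
      HasDerivAt (fun u => ρ r u) (ρθ r t) t)
    (F : ℝ → ℝ) (hF : ContinuousOn F (Set.Ioi 0))
    (r θ : ℝ) (hr : 0 < r) (hθ : θ ∈ Set.Ioo 0 Real.pi) :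
    HasDerivAt (fun r' => pres g a b ρ ρθ F r' θ)
      (1 / r * (F (r * Real.sin θ) + r * Real.sin θ * calF g ρθ (r * Real.sin θ) θ)
        - g * ρ r θ) r ∧
    1 / r * (F (r * Real.sin θ) + r * Real.sin θ * calF g ρθ (r * Real.sin θ) θ)
      = UU g ρθ F r θ / r := by
  obtain ⟨hθ0, hθπ⟩ := hθ
  have hs : 0 < Real.sin θ := Real.sin_pos_of_pos_of_lt_pi hθ0 hθπ
  have hρθc := rho_theta_cont ρ ρθ hρ hρθ
  have hρcont : ContinuousOn (fun s => ρ s θ) (Set.Ioi 0) :=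
    (hρ.continuousOn).comp ((continuous_id.prodMk continuous_const).continuousOn)
      (fun x hx => Set.mk_mem_prod hx ⟨hθ0, hθπ⟩)
  set G : ℝ → ℝ := fun s => F s / s + calF g ρθ s θ with hGdef
  have hG : ContinuousOn G (Set.Ioi 0) :=
    (hF.div continuousOn_id (fun x hx => ne_of_gt hx)).add (calF_contOn g ρθ θ hρθc)
  have hsub1 : Set.uIcc a r ⊆ Set.Ioi 0 := by
    intro x hx
    rcases Set.mem_uIcc.mp hx with ⟨h, _⟩ | ⟨h, _⟩
    · exact lt_of_lt_of_le ha h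
    · exact lt_of_lt_of_le hr h
  have h1 : HasDerivAt (fun r' => ∫ s in a..r', ρ s θ) (ρ r θ) r :=
    intervalIntegral.integral_hasDerivAt_right
      ((hρcont.mono hsub1).intervalIntegrable)
      (hρcont.stronglyMeasurableAtFilter isOpen_Ioi r hr)
      (hρcont.continuousAt (Ioi_mem_nhds hr))
  set x₀ : ℝ := r * Real.sin θ with hx₀def
  have hx₀ : 0 < x₀ := mul_pos hr hs
  have hax : 0 < a * Real.sin θ := mul_pos ha hs
  have hsub2 : Set.uIcc (a * Real.sin θ) x₀ ⊆ Set.Ioi 0 := by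
    intro x hx
    rcases Set.mem_uIcc.mp hx with ⟨h, _⟩ | ⟨h, _⟩
    · exact lt_of_lt_of_le hax h
    · exact lt_of_lt_of_le hx₀ h
  have h2 : HasDerivAt (fun x => ∫ s in (a * Real.sin θ)..x, G s) (G x₀) x₀ :=
    intervalIntegral.integral_hasDerivAt_right
      ((hG.mono hsub2).intervalIntegrable)
      (hG.stronglyMeasurableAtFilter isOpen_Ioi x₀ hx₀)
      (hG.continuousAt (Ioi_mem_nhds hx₀))
  have hlin : HasDerivAt (fun r' : ℝ => r' * Real.sin θ) (Real.sin θ) r := by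
    simpa using (hasDerivAt_id r).mul_const (Real.sin θ)
  have h2' : HasDerivAt (fun r' => ∫ s in (a * Real.sin θ)..(r' * Real.sin θ), G s)
      (G x₀ * Real.sin θ) r := h2.comp r (h := fun r' : ℝ => r' * Real.sin θ) hlin
  have hall : HasDerivAt (fun r' => pres g a b ρ ρθ F r' θ)
      (0 - g * ρ r θ + G x₀ * Real.sin θ) r := by
    have := (((hasDerivAt_const r b).sub (h1.const_mul g)).add h2').add_const
      (∫ s in (Real.pi / 2)..θ,
        (F (a * Real.sin s) * Real.cot s + calF g ρθ (a * Real.sin s) s * a * Real.cos s))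
    exact this
  constructor
  · have hval : 0 - g * ρ r θ + G x₀ * Real.sin θ
        = 1 / r * (F (r * Real.sin θ) + r * Real.sin θ * calF g ρθ (r * Real.sin θ) θ)
          - g * ρ r θ := by
      rw [hGdef, hx₀def]
      field_simp
      ring
    rw [← hval]
    exact hall
  · rw [UU, one_div_mul_eq_div]
end

section
/- For every r > 0 and θ ∈ (0,π), the function θ ↦ p(r,θ) is differentiable and ∂p/∂θ(r,θ) = cot θ·(F(r·sin θ) + r·sin θ·𝓕(r·sin θ, θ)) = cot θ·U(r,θ). -/
open MeasureTheory Set Real intervalIntegral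


lemma myIntegrableCore (f : ℝ → ℝ → ℝ) (hf : Continuous (Function.uncurry f))
    (s t : Set ℝ) (hbs : Bornology.IsBounded s) (hbt : Bornology.IsBounded t) :
    Integrable (Function.uncurry f) ((volume.restrict s).prod (volume.restrict t)) := by
  rw [Measure.prod_restrict]
  have hK : IsCompact (closure (s ×ˢ t)) := ((hbs.prod hbt).isCompact_closure)
  have : IntegrableOn (Function.uncurry f) (closure (s ×ˢ t)) (volume.prod volume) :=
    hf.continuousOn.integrableOn_compact hK
  exact this.mono_set subset_closure

lemma aux_swap (f : ℝ → ℝ → ℝ) (hf : Continuous (Function.uncurry f)) (a b c d : ℝ) :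
    (∫ x in a..b, ∫ y in c..d, f x y) = ∫ y in c..d, ∫ x in a..b, f x y := by
  have core : (∫ x in Set.uIoc a b, ∫ y in Set.uIoc c d, f x y)
      = ∫ y in Set.uIoc c d, ∫ x in Set.uIoc a b, f x y :=
    integral_integral_swap (myIntegrableCore f hf _ _ (Metric.isBounded_Ioc _ _) (Metric.isBounded_Ioc _ _))
  simp only [intervalIntegral_eq_integral_uIoc, MeasureTheory.integral_smul]
  rw [core, smul_comm]

lemma aux_triangle_le (f : ℝ → ℝ → ℝ) (hf : Continuous (Function.uncurry f)) {p q : ℝ}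
    (hpq : p ≤ q) :
    (∫ t in p..q, ∫ τ in t..q, f τ t) = ∫ τ in p..q, ∫ t in p..τ, f τ t := by
  set G : ℝ → ℝ → ℝ := fun t τ => if t < τ then f τ t else 0 with hG
  have hGmeas : Integrable (Function.uncurry G)
      ((volume.restrict (Ioc p q)).prod (volume.restrict (Ioc p q))) := by
    have hbase : Integrable (fun z : ℝ × ℝ => f z.2 z.1)
        ((volume.restrict (Ioc p q)).prod (volume.restrict (Ioc p q))) :=
      myIntegrableCore (fun t τ => f τ t) (by fun_prop) _ _
        (Metric.isBounded_Ioc _ _) (Metric.isBounded_Ioc _ _)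
    have hset : MeasurableSet {z : ℝ × ℝ | z.1 < z.2} :=
      (isOpen_lt continuous_fst continuous_snd).measurableSet
    have : Function.uncurry G = Set.indicator {z : ℝ × ℝ | z.1 < z.2}
        (fun z : ℝ × ℝ => f z.2 z.1) := by
      ext z; simp [Function.uncurry, hG, Set.indicator]
    rw [this]
    exact hbase.indicator hset
  have step1 : (∫ t in p..q, ∫ τ in t..q, f τ t)
      = ∫ t in Ioc p q, ∫ τ in Ioc p q, G t τ := by
    rw [intervalIntegral.integral_of_le hpq]
    refine setIntegral_congr_fun measurableSet_Ioc ?_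
    intro t htm
    simp only []
    rw [intervalIntegral.integral_of_le htm.2]
    have : ∀ τ, G t τ = Set.indicator (Set.Ioi t) (fun τ => f τ t) τ := by
      intro τ; simp [hG, Set.indicator, Set.mem_Ioi]
    simp_rw [this]
    rw [setIntegral_indicator measurableSet_Ioi]
    congr 1
    rw [Set.Ioc_inter_Ioi, max_eq_right htm.1.le]
  have step2 : (∫ t in Ioc p q, ∫ τ in Ioc p q, G t τ)
      = ∫ τ in Ioc p q, ∫ t in Ioc p q, G t τ := integral_integral_swap hGmeas
  have step3 : (∫ τ in Ioc p q, ∫ t in Ioc p q, G t τ)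
      = ∫ τ in p..q, ∫ t in p..τ, f τ t := by
    rw [intervalIntegral.integral_of_le hpq]
    refine setIntegral_congr_fun measurableSet_Ioc ?_
    intro τ hτm
    simp only []
    have : ∀ t, G t τ = Set.indicator (Set.Iio τ) (fun t => f τ t) t := by
      intro t; simp [hG, Set.indicator, Set.mem_Iio]
    simp_rw [this]
    rw [setIntegral_indicator measurableSet_Iio]
    have hseteq : Ioc p q ∩ Iio τ = Ioo p τ := by
      ext t
      simp only [Set.mem_inter_iff, Set.mem_Ioc, Set.mem_Iio, Set.mem_Ioo]
      constructor
      · rintro ⟨⟨h1, _⟩, h3⟩; exact ⟨h1, h3⟩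
      · rintro ⟨h1, h2⟩; exact ⟨⟨h1, le_trans h2.le hτm.2⟩, h2⟩
    rw [hseteq, ← integral_Ioc_eq_integral_Ioo, ← intervalIntegral.integral_of_le hτm.1.le]
  rw [step1, step2, step3]

lemma aux_triangle (f : ℝ → ℝ → ℝ) (hf : Continuous (Function.uncurry f)) (p q : ℝ) :
    (∫ t in p..q, ∫ τ in t..q, f τ t) = ∫ τ in p..q, ∫ t in p..τ, f τ t := by
  rcases le_total p q with h | h
  · exact aux_triangle_le f hf h
  · have key := aux_triangle_le (fun τ t => f t τ) (by fun_prop) h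
    -- key : ∫ t in q..p, ∫ τ in t..p, f t τ = ∫ τ in q..p, ∫ t in q..τ, f t τ
    have lhs : (∫ t in p..q, ∫ τ in t..q, f τ t) = ∫ t in q..p, ∫ τ in q..t, f τ t := by
      rw [intervalIntegral.integral_symm]
      rw [show (fun t => ∫ τ in t..q, f τ t) = fun t => -∫ τ in q..t, f τ t from
        funext fun t => intervalIntegral.integral_symm _ _]
      rw [intervalIntegral.integral_neg, neg_neg]
    have rhs : (∫ τ in p..q, ∫ t in p..τ, f τ t) = ∫ τ in q..p, ∫ t in τ..p, f τ t := by
      rw [intervalIntegral.integral_symm]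
      rw [show (fun τ => ∫ t in p..τ, f τ t) = fun τ => -∫ t in τ..p, f τ t from
        funext fun τ => intervalIntegral.integral_symm _ _]
      rw [intervalIntegral.integral_neg, neg_neg]
    rw [lhs, rhs]
    exact key.symm

lemma one_sub_cos_pos {t : ℝ} (ht : t ∈ Set.Ioo 0 π) : 0 < 1 - Real.cos t := by
  have hs : 0 < Real.sin t := Real.sin_pos_of_pos_of_lt_pi ht.1 ht.2
  nlinarith [Real.sin_sq_add_cos_sq t, Real.cos_le_one t, Real.neg_one_le_cos t]

lemma one_add_cos_pos {t : ℝ} (ht : t ∈ Set.Ioo 0 π) : 0 < 1 + Real.cos t := by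
  have hs : 0 < Real.sin t := Real.sin_pos_of_pos_of_lt_pi ht.1 ht.2
  nlinarith [Real.sin_sq_add_cos_sq t, Real.cos_le_one t, Real.neg_one_le_cos t]

lemma fChar_pi_div_two : fChar (π / 2) = 0 := by
  simp [fChar, Real.cos_pi_div_two]

lemma exp_two_fChar {t : ℝ} (ht : t ∈ Set.Ioo 0 π) :
    Real.exp (2 * fChar t) = (1 - Real.cos t) / (1 + Real.cos t) := by
  have h1 := one_sub_cos_pos ht
  have h2 := one_add_cos_pos ht
  have : 2 * fChar t = Real.log ((1 - Real.cos t) / (1 + Real.cos t)) := by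
    unfold fChar; ring
  rw [this, Real.exp_log (div_pos h1 h2)]

lemma exp_fChar {t : ℝ} (ht : t ∈ Set.Ioo 0 π) :
    Real.exp (fChar t) = (1 - Real.cos t) / Real.sin t := by
  have h1 := one_sub_cos_pos ht
  have h2 := one_add_cos_pos ht
  have hs : 0 < Real.sin t := Real.sin_pos_of_pos_of_lt_pi ht.1 ht.2
  have key : Real.sin t ^ 2 = (1 - Real.cos t) * (1 + Real.cos t) := by
    nlinarith [Real.sin_sq_add_cos_sq t]
  have hE2 : Real.exp (fChar t) ^ 2 = (1 - Real.cos t) / (1 + Real.cos t) := by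
    rw [sq, ← Real.exp_add, show fChar t + fChar t = 2 * fChar t by ring, exp_two_fChar ht]
  have hB2 : ((1 - Real.cos t) / Real.sin t) ^ 2 = (1 - Real.cos t) / (1 + Real.cos t) := by
    rw [div_pow, key, sq]
    exact mul_div_mul_left _ _ h1.ne'
  have h := hE2.trans hB2.symm
  have hfac : (Real.exp (fChar t) - (1 - Real.cos t) / Real.sin t) *
      (Real.exp (fChar t) + (1 - Real.cos t) / Real.sin t) = 0 := by linear_combination h
  rcases mul_eq_zero.mp hfac with h0 | h0
  · linarith
  · have hEpos := Real.exp_pos (fChar t)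
    have hBpos : 0 < (1 - Real.cos t) / Real.sin t := div_pos h1 hs
    linarith

lemma cosh_fChar {t : ℝ} (ht : t ∈ Set.Ioo 0 π) :
    Real.exp (fChar t) + Real.exp (-fChar t) = 2 / Real.sin t := by
  have h1 := one_sub_cos_pos ht
  have hs : 0 < Real.sin t := Real.sin_pos_of_pos_of_lt_pi ht.1 ht.2
  have key : Real.sin t ^ 2 = (1 - Real.cos t) * (1 + Real.cos t) := by
    nlinarith [Real.sin_sq_add_cos_sq t]
  rw [Real.exp_neg, exp_fChar ht, inv_div]
  rw [div_add_div _ _ hs.ne' h1.ne']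
  rw [show (1 - Real.cos t) * (1 - Real.cos t) + Real.sin t * Real.sin t
      = 2 * (1 - Real.cos t) by linear_combination key]
  rw [mul_comm (Real.sin t) (1 - Real.cos t), mul_comm (2:ℝ) (1 - Real.cos t),
    mul_div_mul_left _ _ h1.ne']

lemma thetaBar_fChar {t : ℝ} (ht : t ∈ Set.Ioo 0 π) : thetaBar (fChar t) = t := by
  have h2 := one_add_cos_pos ht
  unfold thetaBar
  rw [exp_two_fChar ht]
  have h1 := one_sub_cos_pos ht
  have hq : 0 < (1 - Real.cos t) / (1 + Real.cos t) := div_pos h1 h2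
  have : (1 - (1 - Real.cos t) / (1 + Real.cos t)) / (1 + (1 - Real.cos t) / (1 + Real.cos t))
      = Real.cos t := by
    rw [div_eq_iff (by linarith : (1 + (1 - Real.cos t) / (1 + Real.cos t)) ≠ 0)]
    field_simp
    ring
  rw [this, Real.arccos_cos ht.1.le ht.2.le]

lemma hasDerivAt_fChar {t : ℝ} (ht : t ∈ Set.Ioo 0 π) :
    HasDerivAt fChar (1 / Real.sin t) t := by
  have h1 := one_sub_cos_pos ht
  have h2 := one_add_cos_pos ht
  have hs : 0 < Real.sin t := Real.sin_pos_of_pos_of_lt_pi ht.1 ht.2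
  have key : Real.sin t ^ 2 = (1 - Real.cos t) * (1 + Real.cos t) := by
    nlinarith [Real.sin_sq_add_cos_sq t]
  have hnum : HasDerivAt (fun θ => 1 - Real.cos θ) (Real.sin t) t := by
    simpa using (Real.hasDerivAt_cos t).const_sub 1
  have hden : HasDerivAt (fun θ => 1 + Real.cos θ) (-Real.sin t) t := by
    simpa using (Real.hasDerivAt_cos t).const_add 1
  have hdiv := hnum.div hden h2.ne'
  have hpos : (0:ℝ) < (1 - Real.cos t) / (1 + Real.cos t) := div_pos h1 h2
  have hlog := (Real.hasDerivAt_log hpos.ne').comp t hdiv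
  have hmul := hlog.const_mul (1/2 : ℝ)
  simp only [Function.comp] at hmul
  have heq : (1:ℝ)/2 * (((1 - Real.cos t) / (1 + Real.cos t))⁻¹ *
      ((Real.sin t * (1 + Real.cos t) - (1 - Real.cos t) * -Real.sin t) / (1 + Real.cos t) ^ 2))
      = 1 / Real.sin t := by
    rw [inv_div,
      show Real.sin t * (1 + Real.cos t) - (1 - Real.cos t) * -Real.sin t
        = 2 * Real.sin t by ring]
    rw [div_mul_div_comm, sq]
    rw [show (1 - Real.cos t) * ((1 + Real.cos t) * (1 + Real.cos t))
        = (1 + Real.cos t) * ((1 - Real.cos t) * (1 + Real.cos t)) by ring]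
    rw [mul_div_mul_left _ _ h2.ne', ← key, sq]
    rw [show (2:ℝ) * Real.sin t / (Real.sin t * Real.sin t) = 2 / Real.sin t by
      rw [mul_comm (Real.sin t) (Real.sin t)]
      rw [show (2:ℝ) * Real.sin t = 2 * Real.sin t by ring]
      exact mul_div_mul_right _ _ hs.ne']
    ring
  rw [heq] at hmul
  exact hmul

lemma thetaBar_monotone : Monotone thetaBar := by
  intro s u hsu
  unfold thetaBar
  rw [Real.arccos, Real.arccos]
  have hEs : (0:ℝ) < Real.exp (2 * s) := Real.exp_pos _
  have hEu : (0:ℝ) < Real.exp (2 * u) := Real.exp_pos _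
  have hle : Real.exp (2 * s) ≤ Real.exp (2 * u) := Real.exp_le_exp.mpr (by linarith)
  have harg : (1 - Real.exp (2 * u)) / (1 + Real.exp (2 * u))
      ≤ (1 - Real.exp (2 * s)) / (1 + Real.exp (2 * s)) := by
    rw [div_le_div_iff₀ (by linarith) (by linarith)]
    nlinarith
  have := Real.monotone_arcsin harg
  linarith

lemma thetaBar_zero : thetaBar 0 = π / 2 := by
  simp [thetaBar]

lemma continuous_thetaBar : Continuous thetaBar := by
  apply Real.continuous_arccos.comp
  apply Continuous.div
  · fun_prop
  · fun_prop
  · intro x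
    have := Real.exp_pos (2 * x)
    positivity

lemma pi_div_two_mem : π / 2 ∈ Set.Ioo 0 π := by
  constructor
  · positivity
  · linarith [Real.pi_pos]

lemma calF_eq (g : ℝ) (ρc : ℝ → ℝ → ℝ) (hc : Continuous fun q : ℝ × ℝ => ρc q.1 q.2)
    {t : ℝ} (ht : t ∈ Set.Ioo 0 π) (ξ : ℝ) :
    calF g ρc ξ t = ∫ τ in (π/2)..t, g * ρc (ξ / Real.sin τ) τ / Real.sin τ := by
  have hsub : Set.uIcc (π/2) t ⊆ Set.Ioo 0 π :=
    Set.ordConnected_Ioo.uIcc_subset pi_div_two_mem ht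
  have hder : ∀ x ∈ Set.uIcc (π/2) t, HasDerivAt fChar ((fun τ => 1 / Real.sin τ) x) x :=
    fun x hx => hasDerivAt_fChar (hsub hx)
  have hcont' : ContinuousOn (fun τ => 1 / Real.sin τ) (Set.uIcc (π/2) t) := by
    apply ContinuousOn.div continuousOn_const Real.continuous_sin.continuousOn
    intro x hx
    exact (Real.sin_pos_of_pos_of_lt_pi (hsub hx).1 (hsub hx).2).ne'
  have hgc : Continuous (fun s => g * ρc (ξ * (Real.exp s + Real.exp (-s)) / 2) (thetaBar s)) := by
    apply continuous_const.mul
    exact hc.comp ((by fun_prop : Continuous fun s : ℝ =>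
      ξ * (Real.exp s + Real.exp (-s)) / 2).prodMk continuous_thetaBar)
  have key := intervalIntegral.integral_comp_smul_deriv hder hcont' hgc
  rw [fChar_pi_div_two] at key
  rw [show calF g ρc ξ t = ∫ s in (0:ℝ)..(fChar t),
    g * ρc (ξ * (Real.exp s + Real.exp (-s)) / 2) (thetaBar s) from rfl, ← key]
  apply intervalIntegral.integral_congr
  intro τ hτ
  have hτ' := hsub hτ
  have hsin : 0 < Real.sin τ := Real.sin_pos_of_pos_of_lt_pi hτ'.1 hτ'.2
  simp only [smul_eq_mul, Function.comp]
  rw [cosh_fChar hτ', thetaBar_fChar hτ']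
  rw [show ξ * (2 / Real.sin τ) / 2 = ξ / Real.sin τ by ring]
  ring

lemma calF_congr (g : ℝ) (ρ1 ρ2 : ℝ → ℝ → ℝ) {t ξ v₁ v₂ : ℝ} (ht : t ∈ Set.Ioo 0 π)
    (hv₁ : 0 ≤ v₁) (hξ1 : v₁ ≤ ξ) (hξ2 : ξ ≤ v₂ * Real.sin t)
    (heq : ∀ v, v₁ ≤ v → v ≤ v₂ → ∀ u, u ∈ Set.uIcc (π/2) t → ρ1 v u = ρ2 v u) :
    calF g ρ1 ξ t = calF g ρ2 ξ t := by
  have hsin : 0 < Real.sin t := Real.sin_pos_of_pos_of_lt_pi ht.1 ht.2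
  apply intervalIntegral.integral_congr
  intro s hs
  rw [Set.uIcc, Set.mem_Icc] at hs
  have habs : |s| ≤ |fChar t| := by
    refine abs_le.mpr ⟨le_trans ?_ hs.1, le_trans hs.2 ?_⟩
    · exact le_inf (neg_nonpos_of_nonneg (abs_nonneg _)) (neg_abs_le _)
    · exact sup_le (abs_nonneg _) (le_abs_self _)
  have hcosh1 : 1 ≤ Real.cosh s := Real.one_le_cosh s
  have hcosh2 : Real.cosh s ≤ Real.cosh (fChar t) := Real.cosh_le_cosh.mpr habs
  have hcf : Real.cosh (fChar t) = 1 / Real.sin t := by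
    rw [Real.cosh_eq, cosh_fChar ht]; ring
  have harg1 : ξ * (Real.exp s + Real.exp (-s)) / 2 = ξ * Real.cosh s := by
    rw [Real.cosh_eq]; ring
  have hξ0 : 0 ≤ ξ := le_trans hv₁ hξ1
  have hb1 : v₁ ≤ ξ * Real.cosh s := le_trans hξ1 (by nlinarith)
  have hb2 : ξ * Real.cosh s ≤ v₂ := by
    rw [hcf] at hcosh2
    have h1 : ξ * Real.cosh s ≤ ξ * (1 / Real.sin t) := by nlinarith
    have h2 : ξ * (1 / Real.sin t) ≤ v₂ := by
      rw [mul_one_div, div_le_iff₀ hsin]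
      exact hξ2
    linarith
  have hu : thetaBar s ∈ Set.uIcc (π/2) t := by
    have hlo := thetaBar_monotone hs.1
    have hhi := thetaBar_monotone hs.2
    rw [thetaBar_monotone.map_min, thetaBar_zero, thetaBar_fChar ht] at hlo
    rw [thetaBar_monotone.map_max, thetaBar_zero, thetaBar_fChar ht] at hhi
    rw [Set.uIcc, Set.mem_Icc]
    exact ⟨hlo, hhi⟩
  simp only []
  congr 1
  rw [harg1]
  exact heq _ hb1 hb2 _ hu

lemma rhoTheta_continuousOn (ρ ρθ : ℝ → ℝ → ℝ)
    (hρ : ContDiffOn ℝ 2 (fun q : ℝ × ℝ => ρ q.1 q.2) (Set.Ioi 0 ×ˢ Set.Ioo 0 Real.pi))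
    (hρθ : ∀ r ∈ Set.Ioi (0:ℝ), ∀ t ∈ Set.Ioo 0 Real.pi,
      HasDerivAt (fun u => ρ r u) (ρθ r t) t) :
    ContinuousOn (fun q : ℝ × ℝ => ρθ q.1 q.2) (Set.Ioi 0 ×ˢ Set.Ioo 0 Real.pi) := by
  have hD : IsOpen (Set.Ioi (0:ℝ) ×ˢ Set.Ioo 0 Real.pi) := isOpen_Ioi.prod isOpen_Ioo
  have hfd : ContinuousOn (fun q => fderiv ℝ (fun q : ℝ × ℝ => ρ q.1 q.2) q)
      (Set.Ioi 0 ×ˢ Set.Ioo 0 Real.pi) :=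
    hρ.continuousOn_fderiv_of_isOpen hD (by norm_num)
  have hcont : ContinuousOn
      (fun q : ℝ × ℝ => fderiv ℝ (fun q : ℝ × ℝ => ρ q.1 q.2) q ((0:ℝ), (1:ℝ)))
      (Set.Ioi 0 ×ˢ Set.Ioo 0 Real.pi) :=
    (ContinuousLinearMap.apply ℝ ℝ ((0:ℝ), (1:ℝ))).continuous.comp_continuousOn hfd
  apply hcont.congr
  intro q hq
  have hq1 : q.1 ∈ Set.Ioi (0:ℝ) := hq.1
  have hq2 : q.2 ∈ Set.Ioo 0 Real.pi := hq.2
  have hdiff : DifferentiableAt ℝ (fun q : ℝ × ℝ => ρ q.1 q.2) q :=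
    (hρ.contDiffAt (hD.mem_nhds hq)).differentiableAt (by norm_num)
  have hcurve : HasDerivAt (fun u : ℝ => (q.1, u)) ((0:ℝ), (1:ℝ)) q.2 :=
    (hasDerivAt_const _ _).prodMk (hasDerivAt_id _)
  have hcomp := hdiff.hasFDerivAt.comp_hasDerivAt q.2 hcurve
  exact (hρθ q.1 hq1 q.2 hq2).unique hcomp

lemma sin_bound {d t : ℝ} (hd0 : 0 ≤ d) (hd2 : d ≤ π/2) (h1 : d ≤ t) (h2 : t ≤ π - d) :
    Real.sin d ≤ Real.sin t := by
  rcases le_total t (π/2) with h | h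
  · exact Real.sin_le_sin_of_le_of_le_pi_div_two (by linarith [Real.pi_pos]) h h1
  · rw [← Real.sin_pi_sub t]
    exact Real.sin_le_sin_of_le_of_le_pi_div_two (by linarith [Real.pi_pos]) (by linarith)
      (by linarith)

attribute [local irreducible] calF

set_option maxHeartbeats 1000000 in
/-- For every `r > 0`, `θ ∈ (0,π)` the map `θ ↦ p(r,θ)` is differentiable and
`p_θ(r,θ) = cot θ·(F(r sin θ) + r sin θ·𝓕(r sin θ,θ)) = cot θ·U(r,θ)`. -/
theorem pressure_deriv_theta (g a b : ℝ) (hg : 0 < g) (ha : 0 < a)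
    (ρ ρθ : ℝ → ℝ → ℝ)
    (hρ : ContDiffOn ℝ 2 (fun q : ℝ × ℝ => ρ q.1 q.2)
      (Set.Ioi 0 ×ˢ Set.Ioo 0 Real.pi))
    (hρθ : ∀ r ∈ Set.Ioi (0:ℝ), ∀ t ∈ Set.Ioo 0 Real.pi,
      HasDerivAt (fun u => ρ r u) (ρθ r t) t)
    (F : ℝ → ℝ) (hF : ContDiffOn ℝ 1 F (Set.Ioi 0))
    (r θ : ℝ) (hr : 0 < r) (hθ : θ ∈ Set.Ioo 0 Real.pi) :
    HasDerivAt (fun θ' => pres g a b ρ ρθ F r θ')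
      (Real.cot θ *
        (F (r * Real.sin θ) + r * Real.sin θ * calF g ρθ (r * Real.sin θ) θ)) θ ∧
    Real.cot θ * (F (r * Real.sin θ) + r * Real.sin θ * calF g ρθ (r * Real.sin θ) θ)
      = Real.cot θ * UU g ρθ F r θ := by
  obtain ⟨hθ0, hθπ⟩ := hθ
  have hπ := Real.pi_pos
  refine ⟨?_, by rw [UU]⟩
  have hρθc := rhoTheta_continuousOn ρ ρθ hρ hρθ
  -- the parameters
  set δ : ℝ := min θ (π - θ) / 2 with hδdef
  have hδpos : 0 < δ := by
    have := lt_min hθ0 (show (0:ℝ) < π - θ by linarith)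
    rw [hδdef]; linarith
  have hδθ1 : δ ≤ θ / 2 := by
    rw [hδdef]; have := min_le_left θ (π - θ); linarith
  have hδθ2 : δ ≤ (π - θ) / 2 := by
    rw [hδdef]; have := min_le_right θ (π - θ); linarith
  have hδle : δ ≤ π / 2 := by
    have hmin : min θ (π - θ) ≤ π / 2 := by
      rcases le_total θ (π - θ) with h | h
      · rw [min_eq_left h]; linarith
      · rw [min_eq_right h]; linarith
    rw [hδdef]; linarith
  have hδππ : δ ≤ π - δ := by linarith
  set sδ : ℝ := Real.sin δ with hsδdef
  have hsδpos : 0 < sδ := Real.sin_pos_of_pos_of_lt_pi hδpos (by linarith)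
  have hsδ1 : sδ ≤ 1 := Real.sin_le_one δ
  set m : ℝ := min a r with hmdef
  set M : ℝ := max a r with hMdef
  have hm : 0 < m := lt_min ha hr
  have hmM : m ≤ M := min_le_max
  have ham : m ≤ a := min_le_left _ _
  have harm : m ≤ r := min_le_right _ _
  have haM : a ≤ M := le_max_left _ _
  have hrM : r ≤ M := le_max_right _ _
  have hMpos : 0 < M := lt_of_lt_of_le hm hmM
  set v₁ : ℝ := m * sδ with hv₁def
  set v₂ : ℝ := M / sδ with hv₂def
  have hv₁pos : 0 < v₁ := mul_pos hm hsδpos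
  have hv₁m : v₁ ≤ m := by rw [hv₁def]; nlinarith
  have hMv₂ : M ≤ v₂ := by rw [hv₂def, le_div_iff₀ hsδpos]; nlinarith
  have hv₁₂ : v₁ ≤ v₂ := by linarith
  -- basic Icc facts
  have hIccIoo : Set.Icc δ (π - δ) ⊆ Set.Ioo 0 π := fun u hu =>
    ⟨lt_of_lt_of_le hδpos hu.1, lt_of_le_of_lt hu.2 (by linarith)⟩
  have hpi2 : π / 2 ∈ Set.Icc δ (π - δ) := ⟨hδle, by linarith⟩
  have hsinge : ∀ u ∈ Set.Icc δ (π - δ), sδ ≤ Real.sin u := fun u hu =>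
    sin_bound hδpos.le hδle hu.1 hu.2
  have hsinpos : ∀ u ∈ Set.Icc δ (π - δ), 0 < Real.sin u := fun u hu =>
    lt_of_lt_of_le hsδpos (hsinge u hu)
  -- clamping functions
  set cT : ℝ → ℝ := fun u => max δ (min u (π - δ)) with hcTdef
  set cV : ℝ → ℝ := fun v => max v₁ (min v v₂) with hcVdef
  have hcT_cont : Continuous cT := by rw [hcTdef]; fun_prop
  have hcTmem : ∀ u, cT u ∈ Set.Icc δ (π - δ) := fun u =>
    ⟨le_max_left _ _, max_le hδππ (min_le_right _ _)⟩
  have hcVmem : ∀ v, cV v ∈ Set.Icc v₁ v₂ := fun v =>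
    ⟨le_max_left _ _, max_le hv₁₂ (min_le_right _ _)⟩
  have hcTid : ∀ u ∈ Set.Icc δ (π - δ), cT u = u := by
    intro u hu; rw [hcTdef]; simp only
    rw [min_eq_left hu.2, max_eq_right hu.1]
  have hcVid : ∀ v ∈ Set.Icc v₁ v₂, cV v = v := by
    intro v hv; rw [hcVdef]; simp only
    rw [min_eq_left hv.2, max_eq_right hv.1]
  set ρh : ℝ → ℝ → ℝ := fun v u => ρθ (cV v) (cT u) with hρhdef
  have hρhc : Continuous (fun q : ℝ × ℝ => ρh q.1 q.2) := by
    have hmaps : ∀ q : ℝ × ℝ, ((cV q.1, cT q.2) : ℝ × ℝ) ∈ Set.Ioi (0:ℝ) ×ˢ Set.Ioo 0 π :=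
      fun q => ⟨lt_of_lt_of_le hv₁pos (hcVmem q.1).1, hIccIoo (hcTmem q.2)⟩
    have : Continuous ((fun q : ℝ × ℝ => ρθ q.1 q.2) ∘ fun q : ℝ × ℝ => (cV q.1, cT q.2)) :=
      hρθc.comp_continuous (by rw [hcVdef, hcTdef]; fun_prop) hmaps
    exact this
  have hρh_eq : ∀ v ∈ Set.Icc v₁ v₂, ∀ u ∈ Set.Icc δ (π - δ), ρh v u = ρθ v u := by
    intro v hv u hu; rw [hρhdef]; simp only
    rw [hcVid v hv, hcTid u hu]
  -- the clamped kernel w and its primitive G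
  have hsinT : ∀ τ, 0 < Real.sin (cT τ) := fun τ => hsinpos _ (hcTmem τ)
  set w : ℝ → ℝ → ℝ := fun ξ τ => g * ρh (ξ / Real.sin (cT τ)) τ / Real.sin (cT τ) with hwdef
  have hw_cont : Continuous (Function.uncurry w) := by
    have hsinT_cont : Continuous fun τ : ℝ => Real.sin (cT τ) := Real.continuous_sin.comp hcT_cont
    have h1 : Continuous fun q : ℝ × ℝ => q.1 / Real.sin (cT q.2) :=
      continuous_fst.div (hsinT_cont.comp continuous_snd) fun q => (hsinT q.2).ne'
    have : Continuous fun q : ℝ × ℝ =>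
        g * ρh (q.1 / Real.sin (cT q.2)) q.2 / Real.sin (cT q.2) :=
      (continuous_const.mul (hρhc.comp (h1.prodMk continuous_snd))).div
        (hsinT_cont.comp continuous_snd) fun q => (hsinT q.2).ne'
    exact this
  have hw_eq : ∀ ξ : ℝ, ∀ τ ∈ Set.Icc δ (π - δ),
      w ξ τ = g * ρh (ξ / Real.sin τ) τ / Real.sin τ := by
    intro ξ τ hτ; rw [hwdef]; simp only; rw [hcTid τ hτ]
  set G : ℝ → ℝ → ℝ := fun ξ y => ∫ τ in (π / 2)..y, w ξ τ with hGdef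
  have hG_cont : Continuous (fun q : ℝ × ℝ => G q.1 q.2) := by
    rw [hGdef]
    exact continuous_parametric_primitive_of_continuous hw_cont
  have hG_calF : ∀ ξ : ℝ, ∀ y ∈ Set.Icc δ (π - δ), G ξ y = calF g ρh ξ y := by
    intro ξ y hy
    rw [calF_eq g ρh hρhc (hIccIoo hy) ξ, hGdef]
    exact intervalIntegral.integral_congr fun τ hτ =>
      hw_eq ξ τ (Set.ordConnected_Icc.uIcc_subset hpi2 hy hτ)
  have hagree : ∀ ξ : ℝ, ∀ y ∈ Set.Icc δ (π - δ), v₁ ≤ ξ → ξ ≤ M * Real.sin y →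
      calF g ρθ ξ y = calF g ρh ξ y := by
    intro ξ y hy h1 h2
    have hsy := hsinge y hy
    have hsyp := hsinpos y hy
    refine calF_congr g ρθ ρh (v₂ := v₂) (hIccIoo hy) hv₁pos.le h1 ?_ ?_
    · have h3 : M * Real.sin y ≤ v₂ * Real.sin y := by nlinarith
      linarith
    · intro v hv1 hv2 u hu
      exact (hρh_eq v ⟨hv1, hv2⟩ u (Set.ordConnected_Icc.uIcc_subset hpi2 hy hu)).symm
  -- the neighbourhood N
  set N : Set ℝ := Set.Ioo δ (π - δ) with hNdef
  have hNopen : IsOpen N := isOpen_Ioo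
  have hθN : θ ∈ N := ⟨by linarith, by linarith⟩
  have hNIcc : N ⊆ Set.Icc δ (π - δ) := Set.Ioo_subset_Icc_self
  -- slice continuity facts
  have hFdiv : ContinuousOn (fun s => F s / s) (Set.Ioi (0:ℝ)) :=
    hF.continuousOn.div continuousOn_id fun x hx => ne_of_gt hx
  have hρ_slice : ∀ u ∈ Set.Ioo 0 π, ContinuousOn (fun v => ρ v u) (Set.Ioi (0:ℝ)) := by
    intro u hu
    have : ContinuousOn ((fun q : ℝ × ℝ => ρ q.1 q.2) ∘ fun v : ℝ => (v, u)) (Set.Ioi 0) :=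
      hρ.continuousOn.comp (by fun_prop : Continuous fun v : ℝ => (v, u)).continuousOn
        fun v hv => Set.mk_mem_prod hv hu
    exact this
  have hcot : ContinuousOn Real.cot (Set.Ioo 0 π) := by
    have : ContinuousOn (fun u => Real.cos u / Real.sin u) (Set.Ioo 0 π) :=
      Real.continuous_cos.continuousOn.div Real.continuous_sin.continuousOn fun u hu =>
        (Real.sin_pos_of_pos_of_lt_pi hu.1 hu.2).ne'
    exact this.congr fun u _ => Real.cot_eq_cos_div_sin u
  -- closed-form pieces
  set Φ : ℝ → ℝ := fun x => ∫ s in v₁..x, F s / s with hΦdef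
  set ψ : ℝ → ℝ := fun u =>
    F (a * Real.sin u) * Real.cot u + r * Real.cos u * G (r * Real.sin u) u with hψdef
  set Kc : ℝ := b - g * ∫ s in a..r, ρ s (π / 2) with hKcdef
  set Q : ℝ → ℝ := fun y =>
    Kc + (Φ (r * Real.sin y) - Φ (a * Real.sin y)) + ∫ u in (π / 2)..y, ψ u with hQdef
  -- THE closed form identity on N
  have hEq : ∀ y ∈ N, pres g a b ρ ρθ F r y = Q y := by
    intro y hy
    have hyIcc : y ∈ Set.Icc δ (π - δ) := hNIcc hy
    have hyIoo : y ∈ Set.Ioo 0 π := hIccIoo hyIcc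
    have hsy : sδ ≤ Real.sin y := hsinge y hyIcc
    have hsyp : 0 < Real.sin y := hsinpos y hyIcc
    have hsy1 : Real.sin y ≤ 1 := Real.sin_le_one y
    have hasy1 : v₁ ≤ a * Real.sin y := by rw [hv₁def]; nlinarith
    have hrsy1 : v₁ ≤ r * Real.sin y := by rw [hv₁def]; nlinarith
    have hasy2 : a * Real.sin y ≤ M * Real.sin y := by nlinarith
    have hrsy2 : r * Real.sin y ≤ M * Real.sin y := by nlinarith
    have hMsyM : M * Real.sin y ≤ M := by nlinarith
    have huIccV : Set.uIcc (a * Real.sin y) (r * Real.sin y) ⊆ Set.Icc v₁ (M * Real.sin y) :=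
      Set.ordConnected_Icc.uIcc_subset ⟨hasy1, hasy2⟩ ⟨hrsy1, hrsy2⟩
    have huIccT : Set.uIcc (π / 2) y ⊆ Set.Icc δ (π - δ) :=
      Set.ordConnected_Icc.uIcc_subset hpi2 hyIcc
    -- calF ρθ = G on the middle interval
    have hmidEq : Set.EqOn (fun s => calF g ρθ s y) (fun s => G s y)
        (Set.uIcc (a * Real.sin y) (r * Real.sin y)) := by
      intro s hs
      obtain ⟨hs1, hs2⟩ := huIccV hs
      simp only
      rw [hagree s y hyIcc hs1 hs2, hG_calF s y hyIcc]
    -- integrability on the middle interval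
    have hsubIoi : Set.uIcc (a * Real.sin y) (r * Real.sin y) ⊆ Set.Ioi (0:ℝ) := fun s hs =>
      lt_of_lt_of_le hv₁pos (huIccV hs).1
    have hFint1 : IntervalIntegrable (fun s => F s / s) volume
        (a * Real.sin y) (r * Real.sin y) := (hFdiv.mono hsubIoi).intervalIntegrable
    have hGsy_cont : Continuous fun s => G s y := by
      simp only [hGdef]
      exact continuous_parametric_intervalIntegral_of_continuous' hw_cont (π / 2) y
    have hcalFint : IntervalIntegrable (fun s => calF g ρθ s y) volume
        (a * Real.sin y) (r * Real.sin y) :=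
      (hGsy_cont.continuousOn.congr hmidEq).intervalIntegrable
    have hsplitmid : (∫ s in (a * Real.sin y)..(r * Real.sin y), (F s / s + calF g ρθ s y))
        = (∫ s in (a * Real.sin y)..(r * Real.sin y), F s / s)
          + ∫ s in (a * Real.sin y)..(r * Real.sin y), calF g ρθ s y :=
      intervalIntegral.integral_add hFint1 hcalFint
    -- inner computation for each τ
    have hinner : ∀ τ ∈ Set.uIcc (π / 2) y,
        (∫ ξ in (a * Real.sin y)..(r * Real.sin y), w ξ τ)
          = g * ((∫ v in a..r, ρh v τ)
              + (∫ v in r..(r * Real.sin y / Real.sin τ), ρh v τ)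
              - ∫ v in a..(a * Real.sin y / Real.sin τ), ρh v τ) := by
      intro τ hτ
      have hτI := huIccT hτ
      have hsτ : 0 < Real.sin τ := hsinpos τ hτI
      have h1 : (∫ ξ in (a * Real.sin y)..(r * Real.sin y), w ξ τ)
          = ∫ ξ in (a * Real.sin y)..(r * Real.sin y),
              (g / Real.sin τ) * ρh (ξ / Real.sin τ) τ := by
        apply intervalIntegral.integral_congr
        intro ξ _
        show w ξ τ = (g / Real.sin τ) * ρh (ξ / Real.sin τ) τ
        rw [hw_eq ξ τ hτI]; ring
      rw [h1, intervalIntegral.integral_const_mul,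
        intervalIntegral.integral_comp_div (fun v => ρh v τ) hsτ.ne']
      have hcont_v : Continuous fun v => ρh v τ :=
        hρhc.comp (show Continuous fun v : ℝ => ((v, τ) : ℝ × ℝ) from by fun_prop)
      have i1 : IntervalIntegrable (fun v => ρh v τ) volume
          (a * Real.sin y / Real.sin τ) a := hcont_v.intervalIntegrable _ _
      have i2 : IntervalIntegrable (fun v => ρh v τ) volume a r := hcont_v.intervalIntegrable _ _
      have i3 : IntervalIntegrable (fun v => ρh v τ) volume r
          (r * Real.sin y / Real.sin τ) := hcont_v.intervalIntegrable _ _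
      have i12 : IntervalIntegrable (fun v => ρh v τ) volume
          (a * Real.sin y / Real.sin τ) r := hcont_v.intervalIntegrable _ _
      have sp1 := intervalIntegral.integral_add_adjacent_intervals i1 i2
      have sp2 := intervalIntegral.integral_add_adjacent_intervals i12 i3
      have hsym : (∫ v in (a * Real.sin y / Real.sin τ)..a, ρh v τ)
          = -∫ v in a..(a * Real.sin y / Real.sin τ), ρh v τ :=
        intervalIntegral.integral_symm _ _
      rw [smul_eq_mul, ← mul_assoc, div_mul_cancel₀ g hsτ.ne']
      have : (∫ v in (a * Real.sin y / Real.sin τ)..(r * Real.sin y / Real.sin τ), ρh v τ)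
          = (∫ v in a..r, ρh v τ) + (∫ v in r..(r * Real.sin y / Real.sin τ), ρh v τ)
            - ∫ v in a..(a * Real.sin y / Real.sin τ), ρh v τ := by
        rw [← sp2, ← sp1]; linarith [hsym]
      rw [this]
    -- the three τ-integrands
    set PA : ℝ → ℝ := fun τ => ∫ v in a..r, ρh v τ with hPAdef
    set Pa : ℝ → ℝ := fun τ => ∫ v in a..(a * Real.sin y / Real.sin (cT τ)), ρh v τ with hPadef
    set Pr : ℝ → ℝ := fun τ => ∫ v in r..(r * Real.sin y / Real.sin (cT τ)), ρh v τ with hPrdef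
    have hswapcont : Continuous (Function.uncurry fun (τ v : ℝ) => ρh v τ) := by
      have : Continuous fun q : ℝ × ℝ => ρh q.2 q.1 :=
        hρhc.comp (continuous_snd.prodMk continuous_fst)
      exact this
    have hPA_cont : Continuous PA := by
      rw [hPAdef]
      exact continuous_parametric_intervalIntegral_of_continuous' hswapcont a r
    have hsinTc : Continuous fun τ : ℝ => Real.sin (cT τ) :=
      Real.continuous_sin.comp hcT_cont
    have hPa_cont : Continuous Pa := by
      rw [hPadef]
      exact continuous_parametric_intervalIntegral_of_continuous hswapcont
        (continuous_const.div hsinTc fun τ => (hsinT τ).ne')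
    have hPr_cont : Continuous Pr := by
      rw [hPrdef]
      exact continuous_parametric_intervalIntegral_of_continuous hswapcont
        (continuous_const.div hsinTc fun τ => (hsinT τ).ne')
    -- the middle calF-part equals g*(TPA + TPr - TPa)
    have e2 : (∫ s in (a * Real.sin y)..(r * Real.sin y), calF g ρθ s y)
        = g * ((∫ τ in (π / 2)..y, PA τ) + (∫ τ in (π / 2)..y, Pr τ)
            - ∫ τ in (π / 2)..y, Pa τ) := by
      rw [intervalIntegral.integral_congr hmidEq]
      have hGBeta : (fun ξ => G ξ y) = fun ξ => ∫ τ in (π / 2)..y, w ξ τ := by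
        rw [hGdef]
      rw [hGBeta, aux_swap w hw_cont _ _ _ _]
      have hcongr : Set.EqOn (fun τ => ∫ ξ in (a * Real.sin y)..(r * Real.sin y), w ξ τ)
          (fun τ => g * (PA τ + Pr τ - Pa τ)) (Set.uIcc (π / 2) y) := by
        intro τ hτ
        have hτI := huIccT hτ
        show (∫ ξ in (a * Real.sin y)..(r * Real.sin y), w ξ τ) = g * (PA τ + Pr τ - Pa τ)
        rw [hinner τ hτ]
        simp only [hPAdef, hPrdef, hPadef, hcTid τ hτI]
      rw [intervalIntegral.integral_congr hcongr, intervalIntegral.integral_const_mul,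
        intervalIntegral.integral_sub (f := fun x => PA x + Pr x) ((hPA_cont.add hPr_cont).intervalIntegrable _ _)
          (hPa_cont.intervalIntegrable _ _),
        intervalIntegral.integral_add (hPA_cont.intervalIntegrable _ _)
          (hPr_cont.intervalIntegrable _ _)]
    -- FTC: the PA-part
    have e3 : (∫ τ in (π / 2)..y, PA τ)
        = (∫ v in a..r, ρ v y) - ∫ v in a..r, ρ v (π / 2) := by
      have hswap2 := aux_swap (fun τ v => ρh v τ) hswapcont (π / 2) y a r
      rw [hPAdef]
      simp only
      rw [hswap2]
      have hper : Set.EqOn (fun v => ∫ τ in (π / 2)..y, ρh v τ)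
          (fun v => ρ v y - ρ v (π / 2)) (Set.uIcc a r) := by
        intro v hv
        rw [Set.uIcc, Set.mem_Icc] at hv
        have hvm : v ∈ Set.Icc v₁ v₂ := ⟨le_trans hv₁m hv.1, le_trans hv.2 hMv₂⟩
        have hv0 : 0 < v := lt_of_lt_of_le hm hv.1
        have hc1 : Set.EqOn (fun τ => ρh v τ) (fun τ => ρθ v τ) (Set.uIcc (π / 2) y) :=
          fun τ hτ => hρh_eq v hvm τ (huIccT hτ)
        simp only
        rw [intervalIntegral.integral_congr hc1]
        apply intervalIntegral.integral_eq_sub_of_hasDerivAt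
        · intro τ hτ
          exact hρθ v hv0 τ (hIccIoo (huIccT hτ))
        · have : Continuous fun τ => ρh v τ :=
            hρhc.comp (continuous_const.prodMk continuous_id)
          exact (this.continuousOn.congr fun τ hτ => (hc1 hτ).symm).intervalIntegrable
      rw [intervalIntegral.integral_congr hper]
      have hsubar : Set.uIcc a r ⊆ Set.Ioi (0:ℝ) := fun v hv => by
        rw [Set.uIcc, Set.mem_Icc] at hv
        exact lt_of_lt_of_le hm hv.1
      exact intervalIntegral.integral_sub
        (((hρ_slice y hyIoo).mono hsubar).intervalIntegrable)
        (((hρ_slice (π / 2) (hIccIoo hpi2)).mono hsubar).intervalIntegrable)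
    -- the triangle step
    have htri : ∀ c : ℝ, 0 < c → c ≤ M →
        (g * ∫ τ in (π / 2)..y, (∫ v in c..(c * Real.sin y / Real.sin (cT τ)), ρh v τ))
          = ∫ σ in (π / 2)..y, c * Real.cos σ * G (c * Real.sin σ) σ := by
      intro c hc hcM
      set h : ℝ → ℝ → ℝ := fun σ τ => c * Real.cos σ * w (c * Real.sin σ) τ with hhdef
      have hh_cont : Continuous (Function.uncurry h) := by
        have h2 : Continuous fun z : ℝ × ℝ => w (c * Real.sin z.1) z.2 :=
          hw_cont.comp ((by fun_prop : Continuous fun z : ℝ × ℝ => c * Real.sin z.1).prodMk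
            continuous_snd)
        have : Continuous fun z : ℝ × ℝ => c * Real.cos z.1 * w (c * Real.sin z.1) z.2 :=
          (by fun_prop : Continuous fun z : ℝ × ℝ => c * Real.cos z.1).mul h2
        exact this
      have hstep : Set.EqOn
          (fun τ => g * ∫ v in c..(c * Real.sin y / Real.sin (cT τ)), ρh v τ)
          (fun τ => ∫ σ in τ..y, h σ τ) (Set.uIcc (π / 2) y) := by
        intro τ hτ
        have hτI := huIccT hτ
        have hsτ : 0 < Real.sin τ := hsinpos τ hτI
        simp only
        rw [hcTid τ hτI]
        have hder : ∀ σ ∈ Set.uIcc τ y,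
            HasDerivAt (fun σ => c * Real.sin σ / Real.sin τ) (c * Real.cos σ / Real.sin τ) σ :=
          fun σ _ => ((Real.hasDerivAt_sin σ).const_mul c).div_const _
        have hcont' : ContinuousOn (fun σ => c * Real.cos σ / Real.sin τ) (Set.uIcc τ y) :=
          ((continuous_const.mul Real.continuous_cos).div_const _).continuousOn
        have hgc : Continuous fun v => ρh v τ :=
          hρhc.comp (show Continuous fun v : ℝ => ((v, τ) : ℝ × ℝ) from by fun_prop)
        have key := intervalIntegral.integral_comp_smul_deriv hder hcont' hgc
        rw [mul_div_assoc, div_self hsτ.ne', mul_one] at key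
        rw [← key, ← intervalIntegral.integral_const_mul]
        apply intervalIntegral.integral_congr
        intro σ _
        simp only [Function.comp, smul_eq_mul]
        rw [hhdef]
        simp only
        rw [hw_eq (c * Real.sin σ) τ hτI]
        ring
      calc g * ∫ τ in (π / 2)..y, (∫ v in c..(c * Real.sin y / Real.sin (cT τ)), ρh v τ)
          = ∫ τ in (π / 2)..y,
              g * ∫ v in c..(c * Real.sin y / Real.sin (cT τ)), ρh v τ :=
            (intervalIntegral.integral_const_mul _ _).symm
        _ = ∫ τ in (π / 2)..y, ∫ σ in τ..y, h σ τ :=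
            intervalIntegral.integral_congr hstep
        _ = ∫ σ in (π / 2)..y, ∫ τ in (π / 2)..σ, h σ τ := aux_triangle h hh_cont (π / 2) y
        _ = ∫ σ in (π / 2)..y, c * Real.cos σ * G (c * Real.sin σ) σ := by
            apply intervalIntegral.integral_congr
            intro σ _
            simp only
            rw [hhdef]
            simp only
            rw [intervalIntegral.integral_const_mul, hGdef]
    -- C-term split
    have hFcot_int : IntervalIntegrable (fun u => F (a * Real.sin u) * Real.cot u)
        volume (π / 2) y := by
      apply ContinuousOn.intervalIntegrable
      apply ContinuousOn.mul
      · exact hF.continuousOn.comp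
          ((by fun_prop : Continuous fun u : ℝ => a * Real.sin u).continuousOn)
          fun u hu => mul_pos ha (hsinpos u (huIccT hu))
      · exact hcot.mono fun u hu => hIccIoo (huIccT hu)
    have hGr_cont : Continuous fun u => r * Real.cos u * G (r * Real.sin u) u := by
      simp only [hGdef]
      apply Continuous.mul
      · fun_prop
      · have hfc : Continuous fun z : ℝ × ℝ => w (r * Real.sin z.1) z.2 :=
          hw_cont.comp (show Continuous fun z : ℝ × ℝ =>
            ((r * Real.sin z.1, z.2) : ℝ × ℝ) from by fun_prop)
        exact continuous_parametric_intervalIntegral_of_continuous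
          (f := fun u τ => w (r * Real.sin u) τ) hfc continuous_id
    have hGa_cont : Continuous fun u => a * Real.cos u * G (a * Real.sin u) u := by
      simp only [hGdef]
      apply Continuous.mul
      · fun_prop
      · have hfc : Continuous fun z : ℝ × ℝ => w (a * Real.sin z.1) z.2 :=
          hw_cont.comp (show Continuous fun z : ℝ × ℝ =>
            ((a * Real.sin z.1, z.2) : ℝ × ℝ) from by fun_prop)
        exact continuous_parametric_intervalIntegral_of_continuous
          (f := fun u τ => w (a * Real.sin u) τ) hfc continuous_id
    have e6 : (∫ u in (π / 2)..y,
          (F (a * Real.sin u) * Real.cot u + calF g ρθ (a * Real.sin u) u * a * Real.cos u))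
        = (∫ u in (π / 2)..y, F (a * Real.sin u) * Real.cot u)
          + ∫ σ in (π / 2)..y, a * Real.cos σ * G (a * Real.sin σ) σ := by
      have hEqInt : Set.EqOn
          (fun u => F (a * Real.sin u) * Real.cot u + calF g ρθ (a * Real.sin u) u * a * Real.cos u)
          (fun u => F (a * Real.sin u) * Real.cot u + a * Real.cos u * G (a * Real.sin u) u)
          (Set.uIcc (π / 2) y) := by
        intro u hu
        have huI := huIccT hu
        have hsu := hsinge u huI
        have hsup := hsinpos u huI
        have h1 : calF g ρθ (a * Real.sin u) u = G (a * Real.sin u) u := by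
          rw [hagree _ u huI (by rw [hv₁def]; nlinarith) (by nlinarith), hG_calF _ u huI]
        simp only
        rw [h1]; ring
      rw [intervalIntegral.integral_congr hEqInt]
      exact intervalIntegral.integral_add hFcot_int (hGa_cont.intervalIntegrable _ _)
    -- F/s adjacent split
    have e7 : (∫ s in (a * Real.sin y)..(r * Real.sin y), F s / s)
        = Φ (r * Real.sin y) - Φ (a * Real.sin y) := by
      have hasy0 : 0 < a * Real.sin y := lt_of_lt_of_le hv₁pos hasy1
      have hrsy0 : 0 < r * Real.sin y := lt_of_lt_of_le hv₁pos hrsy1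
      have hint1 : IntervalIntegrable (fun s => F s / s) volume (a * Real.sin y) v₁ :=
        ((hFdiv.mono (Set.ordConnected_Ioi.uIcc_subset hasy0 hv₁pos)).intervalIntegrable)
      have hint2 : IntervalIntegrable (fun s => F s / s) volume v₁ (r * Real.sin y) :=
        ((hFdiv.mono (Set.ordConnected_Ioi.uIcc_subset hv₁pos hrsy0)).intervalIntegrable)
      have hadj := intervalIntegral.integral_add_adjacent_intervals hint1 hint2
      have hsym : (∫ s in (a * Real.sin y)..v₁, F s / s)
          = -∫ s in v₁..(a * Real.sin y), F s / s := intervalIntegral.integral_symm _ _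
      rw [hΦdef]
      simp only
      linarith
    -- ψ-integral split
    have e8 : (∫ u in (π / 2)..y, ψ u)
        = (∫ u in (π / 2)..y, F (a * Real.sin u) * Real.cot u)
          + ∫ σ in (π / 2)..y, r * Real.cos σ * G (r * Real.sin σ) σ := by
      rw [hψdef]
      exact intervalIntegral.integral_add hFcot_int (hGr_cont.intervalIntegrable _ _)
    -- assemble everything
    have e4 : g * (∫ τ in (π / 2)..y, Pr τ)
        = ∫ σ in (π / 2)..y, r * Real.cos σ * G (r * Real.sin σ) σ := by
      simpa only [hPrdef] using htri r hr hrM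
    have e5 : g * (∫ τ in (π / 2)..y, Pa τ)
        = ∫ σ in (π / 2)..y, a * Real.cos σ * G (a * Real.sin σ) σ := by
      simpa only [hPadef] using htri a ha haM
    show b - g * (∫ s in a..r, ρ s y)
        + (∫ s in (a * Real.sin y)..(r * Real.sin y), (F s / s + calF g ρθ s y))
        + (∫ u in (π / 2)..y,
            (F (a * Real.sin u) * Real.cot u + calF g ρθ (a * Real.sin u) u * a * Real.cos u))
        = Q y
    rw [hsplitmid, e2, e3, e6, e7, hQdef]
    simp only
    rw [e8, hKcdef]
    linarith [e4, e5]

  -- differentiation of Q at θ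
  have hθIcc : θ ∈ Set.Icc δ (π - δ) := hNIcc hθN
  have hsθp : 0 < Real.sin θ := Real.sin_pos_of_pos_of_lt_pi hθ0 hθπ
  have hΦder : ∀ x : ℝ, 0 < x → HasDerivAt Φ (F x / x) x := by
    intro x hx
    rw [hΦdef]
    apply intervalIntegral.integral_hasDerivAt_right
    · exact (hFdiv.mono (Set.ordConnected_Ioi.uIcc_subset hv₁pos hx)).intervalIntegrable
    · exact ContinuousOn.stronglyMeasurableAtFilter isOpen_Ioi hFdiv x hx
    · exact hFdiv.continuousAt (isOpen_Ioi.mem_nhds hx)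
  have hsinR : HasDerivAt (fun y => r * Real.sin y) (r * Real.cos θ) θ :=
    (Real.hasDerivAt_sin θ).const_mul r
  have hsinA : HasDerivAt (fun y => a * Real.sin y) (a * Real.cos θ) θ :=
    (Real.hasDerivAt_sin θ).const_mul a
  have hd1 : HasDerivAt (fun y => Φ (r * Real.sin y))
      (F (r * Real.sin θ) / (r * Real.sin θ) * (r * Real.cos θ)) θ :=
    by have := (hΦder _ (mul_pos hr hsθp)).comp θ hsinR; exact this
  have hd2 : HasDerivAt (fun y => Φ (a * Real.sin y))
      (F (a * Real.sin θ) / (a * Real.sin θ) * (a * Real.cos θ)) θ :=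
    by have := (hΦder _ (mul_pos ha hsθp)).comp θ hsinA; exact this
  have hψcont : ContinuousOn ψ (Set.Ioo 0 π) := by
    rw [hψdef]
    apply ContinuousOn.add
    · apply ContinuousOn.mul
      · exact hF.continuousOn.comp
          ((by fun_prop : Continuous fun u : ℝ => a * Real.sin u).continuousOn)
          fun u hu => mul_pos ha (Real.sin_pos_of_pos_of_lt_pi hu.1 hu.2)
      · exact hcot
    · apply Continuous.continuousOn
      simp only [hGdef]
      apply Continuous.mul
      · fun_prop
      · have hfc : Continuous fun z : ℝ × ℝ => w (r * Real.sin z.1) z.2 :=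
          hw_cont.comp (show Continuous fun z : ℝ × ℝ =>
            ((r * Real.sin z.1, z.2) : ℝ × ℝ) from by fun_prop)
        exact continuous_parametric_intervalIntegral_of_continuous
          (f := fun u τ => w (r * Real.sin u) τ) hfc continuous_id
  have hθIoo : θ ∈ Set.Ioo 0 π := ⟨hθ0, hθπ⟩
  have hψint : IntervalIntegrable ψ volume (π / 2) θ :=
    (hψcont.mono (Set.ordConnected_Ioo.uIcc_subset pi_div_two_mem hθIoo)).intervalIntegrable
  have hdψ : HasDerivAt (fun y => ∫ u in (π / 2)..y, ψ u) (ψ θ) θ :=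
    intervalIntegral.integral_hasDerivAt_right hψint
      (ContinuousOn.stronglyMeasurableAtFilter isOpen_Ioo hψcont θ hθIoo)
      (hψcont.continuousAt (isOpen_Ioo.mem_nhds hθIoo))
  have hQder : HasDerivAt Q
      (F (r * Real.sin θ) / (r * Real.sin θ) * (r * Real.cos θ)
        - F (a * Real.sin θ) / (a * Real.sin θ) * (a * Real.cos θ) + ψ θ) θ := by
    rw [hQdef]
    exact (((hd1.sub hd2).const_add Kc).add hdψ)
  have hEqF : (fun y => pres g a b ρ ρθ F r y) =ᶠ[nhds θ] Q :=
    Filter.eventuallyEq_of_mem (hNopen.mem_nhds hθN) hEq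
  have hpresder := hQder.congr_of_eventuallyEq hEqF
  have hGθ : G (r * Real.sin θ) θ = calF g ρθ (r * Real.sin θ) θ := by
    rw [hG_calF _ θ hθIcc]
    refine (hagree _ θ hθIcc ?_ ?_).symm
    · rw [hv₁def]
      have : sδ ≤ Real.sin θ := hsinge θ hθIcc
      nlinarith
    · nlinarith [hsinge θ hθIcc]
  have hval : F (r * Real.sin θ) / (r * Real.sin θ) * (r * Real.cos θ)
        - F (a * Real.sin θ) / (a * Real.sin θ) * (a * Real.cos θ) + ψ θ
      = Real.cot θ * (F (r * Real.sin θ) + r * Real.sin θ * calF g ρθ (r * Real.sin θ) θ) := by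
    rw [hψdef]
    simp only
    rw [hGθ, Real.cot_eq_cos_div_sin]
    field_simp
    ring
  rw [← hval]
  exact hpresder
end
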